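/- arXiv:2507.14068 — 7 statements merged into one kernel-verified Lean document; each statement's English description precedes it below -/
import Mathlib

section
/- Let L be a finite G-lattice and let x, x', y, y' ∈ L be elements with x < y and x' < y'. Then ⌊x → y⌋ = ⌊x' → y'⌋ if and only if there exists g ∈ G such that g·x = x' and g·y = y'. -/
/-- A transfer system on a `G`-lattice `L`: a partial order refining `≤`,
closed under the `G`-action and under restriction. -/
structure TransferSystem (G L : Type*) [Group G] [Lattice L] [MulAction G L] : Type _ where
  rel : L → L → Prop
  refl : ∀ x, rel x x
  trans : ∀ {x y z}, rel x y → rel y z → rel x z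
  le_of_rel : ∀ {x y}, rel x y → x ≤ y
  smul_rel : ∀ (g : G) {x y}, rel x y → rel (g • x) (g • y)
  restrict : ∀ {x y x'}, rel x y → x' ≤ y → rel (x ⊓ x') x'

namespace TransferSystem

variable {G L : Type*} [Group G] [Lattice L] [MulAction G L]
  [CovariantClass G L (· • ·) (· ≤ ·)]

theorem ext' {S T : TransferSystem G L} (h : S.rel = T.rel) : S = T := by
  cases S; cases T; simpa using h

instance : PartialOrder (TransferSystem G L) where
  le S T := ∀ ⦃x y : L⦄, S.rel x y → T.rel x y
  le_refl S := fun _ _ h => h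
  le_trans S T U h1 h2 := fun _ _ h => h2 (h1 h)
  le_antisymm S T h1 h2 :=
    ext' (by funext x y; exact propext ⟨fun h => h1 h, fun h => h2 h⟩)

lemma smul_mono' (g : G) {x y : L} (h : x ≤ y) : g • x ≤ g • y :=
  CovariantClass.elim g h

/-- The intersection of a set of transfer systems. -/
def sInfTS (s : Set (TransferSystem G L)) : TransferSystem G L where
  rel x y := x ≤ y ∧ ∀ T ∈ s, T.rel x y
  refl x := ⟨le_refl x, fun T _ => T.refl x⟩
  trans h1 h2 := ⟨h1.1.trans h2.1, fun T hT => T.trans (h1.2 T hT) (h2.2 T hT)⟩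
  le_of_rel h := h.1
  smul_rel g _ _ h := ⟨smul_mono' g h.1, fun T hT => T.smul_rel g (h.2 T hT)⟩
  restrict h hle := ⟨inf_le_right, fun T hT => T.restrict (h.2 T hT) hle⟩

instance : InfSet (TransferSystem G L) := ⟨sInfTS⟩

theorem sInf_rel (s : Set (TransferSystem G L)) (x y : L) :
    (sInf s).rel x y ↔ x ≤ y ∧ ∀ T ∈ s, T.rel x y := Iff.rfl

/-- The lattice of transfer systems, ordered by refinement. -/
instance : CompleteLattice (TransferSystem G L) :=
  completeLatticeOfInf _ (fun s =>
    ⟨fun T hT _ _ h => h.2 T hT,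
     fun T hT _ _ h => ((sInf_rel s _ _).2 ⟨T.le_of_rel h, fun S hS => hT hS h⟩)⟩)

/-- `⌊x → y⌋`, the smallest transfer system containing the pair `(x, y)`. -/
def gen (x y : L) : TransferSystem G L := sInf {T : TransferSystem G L | T.rel x y}

end TransferSystem

namespace TSAux

open TransferSystem

variable {G L : Type*} [Group G] [Lattice L] [MulAction G L]
  [CovariantClass G L (· • ·) (· ≤ ·)]

lemma smul_inf (g : G) (a b : L) : g • (a ⊓ b) = g • a ⊓ g • b := by
  apply le_antisymm
  · exact le_inf (smul_mono' g inf_le_left) (smul_mono' g inf_le_right)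
  · have h : g⁻¹ • (g • a ⊓ g • b) ≤ a ⊓ b := by
      refine le_inf ?_ ?_
      · have := smul_mono' (g⁻¹) (inf_le_left (a := g • a) (b := g • b))
        simpa using this
      · have := smul_mono' (g⁻¹) (inf_le_right (a := g • a) (b := g • b))
        simpa using this
    have := smul_mono' g h
    simpa using this

lemma smul_eq_of_le_smul [Finite G] {g : G} {a : L} (h : a ≤ g • a) : g • a = a := by
  have key : ∀ k : ℕ, a ≤ g ^ k • a := by
    intro k
    induction k with
    | zero => simp
    | succ n ih =>
        calc a ≤ g • a := h
        _ ≤ g • (g ^ n • a) := smul_mono' g ih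
        _ = g ^ (n + 1) • a := by rw [← mul_smul, ← pow_succ']
  have hn : 0 < orderOf g := orderOf_pos g
  have hle : g • a ≤ a := by
    have h1 := smul_mono' g (key (orderOf g - 1))
    have h2 : g • (g ^ (orderOf g - 1) • a) = a := by
      rw [← mul_smul, ← pow_succ', Nat.sub_add_cancel hn, pow_orderOf_eq_one, one_smul]
    rw [h2] at h1
    exact h1
  exact le_antisymm hle h

/-- The basic step relation generating `⌊x → y⌋`. -/
def step (x y a b : L) : Prop := ∃ g : G, a = (g • x) ⊓ b ∧ b ≤ g • y

lemma le_of_chain {x y a b : L} (h : Relation.ReflTransGen (step (G := G) x y) a b) :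
    a ≤ b := by
  induction h with
  | refl => exact le_refl _
  | tail _ hs ih =>
      obtain ⟨g, hm, _⟩ := hs
      exact le_trans ih (hm ▸ inf_le_right)

/-- The transfer system of chains of basic steps. -/
def chainTS (x y : L) : TransferSystem G L where
  rel := Relation.ReflTransGen (step (G := G) x y)
  refl _ := Relation.ReflTransGen.refl
  trans h1 h2 := h1.trans h2
  le_of_rel h := le_of_chain h
  smul_rel g _ _ h := by
    induction h with
    | refl => exact Relation.ReflTransGen.refl
    | tail _ hs ih =>
        refine ih.tail ?_
        obtain ⟨k, hm, hb⟩ := hs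
        refine ⟨g * k, ?_, ?_⟩
        · rw [hm, smul_inf, mul_smul]
        · rw [mul_smul]; exact smul_mono' g hb
  restrict {a b c} h hle := by
    induction h generalizing c with
    | refl => rw [inf_eq_right.2 hle]
    | @tail m b hm hs ih =>
        obtain ⟨g, hmeq, hby⟩ := hs
        have ham : a ≤ m := le_of_chain hm
        have h1 : Relation.ReflTransGen (step (G := G) x y) (a ⊓ (m ⊓ c)) (m ⊓ c) :=
          ih inf_le_left
        have h2 : a ⊓ (m ⊓ c) = a ⊓ c := by
          rw [← inf_assoc, inf_eq_left.2 ham]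
        have h3 : step (G := G) x y (m ⊓ c) c := by
          refine ⟨g, ?_, le_trans hle hby⟩
          rw [hmeq, inf_assoc, inf_eq_right.2 hle]
        rw [h2] at h1
        exact h1.tail h3

lemma chainTS_self {x y : L} (hxy : x ≤ y) : (chainTS (G := G) x y).rel x y :=
  Relation.ReflTransGen.single ⟨1, by simp [inf_eq_left.2 hxy], by simp⟩

lemma gen_self {x y : L} (hxy : x ≤ y) : (gen (G := G) x y).rel x y :=
  ⟨hxy, fun _ hT => hT⟩

lemma gen_le {x y : L} {T : TransferSystem G L} (hT : T.rel x y) :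
    gen (G := G) x y ≤ T := fun _ _ h => h.2 T hT

end TSAux

/-- For a finite `G`-lattice and `x < y`, `x' < y'`, we have
`⌊x → y⌋ = ⌊x' → y'⌋` iff there is `g ∈ G` with `g • x = x'` and `g • y = y'`. -/
theorem gen_eq_gen_iff_exists_smul {G L : Type*} [Group G] [Finite G] [Lattice L] [Finite L]
    [MulAction G L] [CovariantClass G L (· • ·) (· ≤ ·)]
    (x x' y y' : L) (hxy : x < y) (hxy' : x' < y') :
    TransferSystem.gen (G := G) x y = TransferSystem.gen (G := G) x' y' ↔
      ∃ g : G, g • x = x' ∧ g • y = y' := by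
  constructor
  · intro hgen
    -- Extract chains of basic steps in both directions.
    have h1 : (TransferSystem.gen (G := G) x' y').rel x y := by
      rw [← hgen]; exact TSAux.gen_self hxy.le
    have h2 : (TransferSystem.gen (G := G) x y).rel x' y' := by
      rw [hgen]; exact TSAux.gen_self hxy'.le
    have hc1 : Relation.ReflTransGen (TSAux.step (G := G) x' y') x y :=
      TSAux.gen_le (TSAux.chainTS_self hxy'.le) h1
    have hc2 : Relation.ReflTransGen (TSAux.step (G := G) x y) x' y' :=
      TSAux.gen_le (TSAux.chainTS_self hxy.le) h2
    -- From the last step of each chain, get translate inequalities.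
    rcases hc1.cases_tail with heq | ⟨m, hm, g, hmeq, hyg⟩
    · exact absurd heq hxy.ne'
    rcases hc2.cases_tail with heq | ⟨m', hm', k, hmeq', hyk⟩
    · exact absurd heq hxy'.ne'
    have hxg : x ≤ g • x' := by
      have := TSAux.le_of_chain hm
      rw [hmeq] at this
      exact this.trans inf_le_left
    have hxk : x' ≤ k • x := by
      have := TSAux.le_of_chain hm'
      rw [hmeq'] at this
      exact this.trans inf_le_left
    -- Finite-order fixed point arguments.
    have hyy : y ≤ (g * k) • y := by
      rw [mul_smul]
      exact hyg.trans (TransferSystem.smul_mono' g hyk)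
    have hxx : x ≤ (g * k) • x := by
      rw [mul_smul]
      exact hxg.trans (TransferSystem.smul_mono' g hxk)
    have hyfix := TSAux.smul_eq_of_le_smul hyy
    have hxfix := TSAux.smul_eq_of_le_smul hxx
    have hgy : g • y' = y := by
      refine le_antisymm ?_ hyg
      have : g • y' ≤ (g * k) • y := by
        rw [mul_smul]; exact TransferSystem.smul_mono' g hyk
      rw [hyfix] at this
      exact this
    have hgx : g • x' = x := by
      refine le_antisymm ?_ hxg
      have : g • x' ≤ (g * k) • x := by
        rw [mul_smul]; exact TransferSystem.smul_mono' g hxk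
      rw [hxfix] at this
      exact this
    refine ⟨g⁻¹, ?_, ?_⟩
    · rw [← hgx, inv_smul_smul]
    · rw [← hgy, inv_smul_smul]
  · rintro ⟨g, hgx, hgy⟩
    have key : ∀ (u v u' v' : L), u ≤ v → (∃ h : G, h • u = u' ∧ h • v = v') →
        TransferSystem.gen (G := G) u v ≤ TransferSystem.gen (G := G) u' v' := by
      rintro u v u' v' huv ⟨h, rfl, rfl⟩
      refine TSAux.gen_le ?_
      have := (TransferSystem.gen (G := G) (h • u) (h • v)).smul_rel h⁻¹
        (TSAux.gen_self (TransferSystem.smul_mono' h huv))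
      simpa using this
    exact le_antisymm
      (key x y x' y' hxy.le ⟨g, hgx, hgy⟩)
      (key x' y' x y hxy'.le ⟨g⁻¹, by rw [← hgx, inv_smul_smul], by rw [← hgy, inv_smul_smul]⟩)
end

section
/- Let L be a finite G-lattice and let T be a join-irreducible element of the lattice Tr(L) of transfer systems on L. Then T = ⌊x → y⌋ for some x, y ∈ L with x < y. -/
open TransferSystem in
lemma gen_le_of_rel {G L : Type*} [Group G] [Lattice L] [MulAction G L]
    [CovariantClass G L (· • ·) (· ≤ ·)]
    {T : TransferSystem G L} {x y : L} (h : T.rel x y) :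
    TransferSystem.gen x y ≤ T :=
  sInf_le (show T ∈ {S : TransferSystem G L | S.rel x y} from h)

open TransferSystem in
lemma gen_rel_self {G L : Type*} [Group G] [Lattice L] [MulAction G L]
    [CovariantClass G L (· • ·) (· ≤ ·)]
    {x y : L} (h : x ≤ y) : (TransferSystem.gen (G := G) x y).rel x y :=
  (TransferSystem.sInf_rel _ x y).2 ⟨h, fun _ hS => hS⟩

lemma le_rel {G L : Type*} [Group G] [Lattice L] [MulAction G L]
    [CovariantClass G L (· • ·) (· ≤ ·)]
    {S T : TransferSystem G L} (h : S ≤ T) {x y : L} (hxy : S.rel x y) : T.rel x y := h hxy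

/-- Every join-irreducible element of `Tr(L)` is of the form `⌊x → y⌋`
for some `x < y`. -/
theorem supIrred_eq_gen {G L : Type*} [Group G] [Finite G] [Lattice L] [Finite L]
    [MulAction G L] [CovariantClass G L (· • ·) (· ≤ ·)]
    (T : TransferSystem G L) (hT : SupIrred T) :
    ∃ x y : L, x < y ∧ T = TransferSystem.gen x y := by
  classical
  cases nonempty_fintype L
  let s : Finset (L × L) := Finset.univ.filter (fun p => T.rel p.1 p.2 ∧ p.1 ≠ p.2)
  have hsup : s.sup (fun p => TransferSystem.gen (G := G) p.1 p.2) = T := by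
    apply le_antisymm
    · exact Finset.sup_le fun p hp =>
        gen_le_of_rel ((Finset.mem_filter.1 hp).2.1)
    · intro x y h
      by_cases hxy : x = y
      · subst hxy
        exact ((s.sup (fun p => TransferSystem.gen (G := G) p.1 p.2))).refl x
      · have hp : (x, y) ∈ s := Finset.mem_filter.2 ⟨Finset.mem_univ _, h, hxy⟩
        exact le_rel (Finset.le_sup (f := fun p => TransferSystem.gen (G := G) p.1 p.2) hp)
          (gen_rel_self (T.le_of_rel h))
  obtain ⟨p, hp, hpeq⟩ := hT.finset_sup_eq hsup
  obtain ⟨-, hrel, hne⟩ := Finset.mem_filter.1 hp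
  exact ⟨p.1, p.2, lt_of_le_of_ne (T.le_of_rel hrel) hne, hpeq.symm⟩
end

section
/- Let L be a finite G-lattice. Then the set of join-irreducible elements of Tr(L) is exactly {⌊x → y⌋ : x, y ∈ L, x < y}, and the assignment (x, y) ↦ ⌊x → y⌋ induces a bijection from the set of orbits of the diagonal G-action g·(x, y) = (g·x, g·y) on the set {(x, y) ∈ L × L : x < y} to the set of join-irreducible elements of Tr(L). In particular, the number of join-irreducible elements of Tr(L) equals the number of G-orbits of pairs (x, y) with x < y. -/
/-- The orbit equivalence relation for the diagonal `G`-action on the set of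
nontrivial relations `{(x, y) : x < y}` in `L`. -/
def pairOrbitSetoid (G L : Type*) [Group G] [Lattice L] [MulAction G L] :
    Setoid {p : L × L // p.1 < p.2} where
  r p q := ∃ g : G, g • p.1 = q.1
  iseqv := by
    refine ⟨fun p => ⟨1, one_smul _ _⟩, ?_, ?_⟩
    · rintro p q ⟨g, hg⟩
      exact ⟨g⁻¹, by rw [← hg, inv_smul_smul]⟩
    · rintro p q r ⟨g, hg⟩ ⟨g', hg'⟩
      exact ⟨g' * g, by rw [mul_smul, hg, hg']⟩

namespace TransferSystem

section Aux

variable {G L : Type*} [Group G] [Lattice L] [MulAction G L]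
  [CovariantClass G L (· • ·) (· ≤ ·)]

lemma smul_inf' (g : G) (a b : L) : g • (a ⊓ b) = g • a ⊓ g • b := by
  apply le_antisymm
  · exact le_inf (smul_mono' g inf_le_left) (smul_mono' g inf_le_right)
  · have h1 : g⁻¹ • (g • a ⊓ g • b) ≤ a := by
      have := smul_mono' g⁻¹ (inf_le_left (a := g • a) (b := g • b))
      simpa using this
    have h2 : g⁻¹ • (g • a ⊓ g • b) ≤ b := by
      have := smul_mono' g⁻¹ (inf_le_right (a := g • a) (b := g • b))
      simpa using this
    have := smul_mono' g (le_inf h1 h2)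
    simpa using this

lemma smul_le_rigid [Finite G] (g : G) (a : L) (h : g • a ≤ a) : g • a = a := by
  have key : ∀ n : ℕ, g ^ n • a ≤ a := by
    intro n
    induction n with
    | zero => simp
    | succ n ih =>
      calc g ^ (n + 1) • a = g ^ n • (g • a) := by rw [pow_succ, mul_smul]
        _ ≤ g ^ n • a := smul_mono' _ h
        _ ≤ a := ih
  refine le_antisymm h ?_
  have hpos : 0 < orderOf g := orderOf_pos g
  have h2 : a = g • (g ^ (orderOf g).pred • a) := by
    conv_lhs => rw [← one_smul G a, ← pow_orderOf_eq_one g,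
      ← Nat.succ_pred_eq_of_pos hpos, pow_succ', mul_smul]
  calc a = g • (g ^ (orderOf g).pred • a) := h2
    _ ≤ g • a := smul_mono' g (key _)

variable (G) in
/-- One generating step for `⌊x → y⌋`. -/
def genStep (x y a b : L) : Prop := ∃ g : G, a = g • x ⊓ b ∧ b ≤ g • y

variable (G) in
/-- Explicit description of the relation of `⌊x → y⌋`. -/
def genRel (x y : L) : L → L → Prop := Relation.ReflTransGen (genStep G x y)

lemma genRel_le {x y a b : L} (h : genRel G x y a b) : a ≤ b := by
  induction h with
  | refl => exact le_refl _
  | tail _ hstep ih =>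
    obtain ⟨g, hc, _⟩ := hstep
    exact le_trans ih (hc.le.trans inf_le_right)

/-- The transfer system with relation `genRel`. -/
def genTS (x y : L) : TransferSystem G L where
  rel := genRel G x y
  refl _ := Relation.ReflTransGen.refl
  trans h1 h2 := h1.trans h2
  le_of_rel h := genRel_le h
  smul_rel g {a b} h := by
    induction h with
    | refl => exact Relation.ReflTransGen.refl
    | tail _ hstep ih =>
      obtain ⟨k, hc, hy⟩ := hstep
      refine ih.tail ⟨g * k, ?_, ?_⟩
      · rw [hc, smul_inf', mul_smul]
      · calc g • _ ≤ g • (k • y) := smul_mono' g hy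
          _ = (g * k) • y := (mul_smul ..).symm
  restrict {a b a'} h hle := by
    induction h using Relation.ReflTransGen.head_induction_on with
    | refl =>
      have hb : b ⊓ a' = a' := inf_eq_right.mpr hle
      rw [hb]
      exact Relation.ReflTransGen.refl
    | head hstep _ ih =>
      obtain ⟨k, hc, hy⟩ := hstep
      refine Relation.ReflTransGen.head ⟨k, ?_, ?_⟩ ih
      · rw [hc, inf_assoc]
      · exact inf_le_left.trans hy

lemma genTS_rel_self {x y : L} (hxy : x ≤ y) : (genTS (G := G) x y).rel x y :=
  Relation.ReflTransGen.single ⟨1, by rw [one_smul, inf_eq_left.mpr hxy], by rw [one_smul]⟩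

lemma genRel_min {x y : L} {T : TransferSystem G L} (hT : T.rel x y)
    {a b : L} (h : genRel G x y a b) : T.rel a b := by
  induction h with
  | refl => exact T.refl _
  | tail _ hstep ih =>
    obtain ⟨g, hc, hby⟩ := hstep
    refine T.trans ih ?_
    rw [hc]
    exact T.restrict (T.smul_rel g hT) hby

lemma gen_rel_iff {x y : L} (hxy : x ≤ y) {a b : L} :
    (gen (G := G) x y).rel a b ↔ genRel G x y a b := by
  constructor
  · intro h
    exact (sInf_rel {T : TransferSystem G L | T.rel x y} a b).1 h |>.2
      (genTS x y) (genTS_rel_self hxy)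
  · intro h
    exact (sInf_rel {T : TransferSystem G L | T.rel x y} a b).2
      ⟨genRel_le h, fun T hT => genRel_min hT h⟩

lemma gen_rel_self {x y : L} (hxy : x ≤ y) : (gen (G := G) x y).rel x y :=
  (gen_rel_iff hxy).2 (genTS_rel_self hxy)

lemma gen_le_iff {x y : L} (hxy : x ≤ y) {T : TransferSystem G L} :
    gen (G := G) x y ≤ T ↔ T.rel x y := by
  constructor
  · intro h
    exact h (gen_rel_self hxy)
  · intro h a b hab
    exact genRel_min h ((gen_rel_iff hxy).1 hab)

lemma genRel_last {x y a b : L} (h : genRel G x y a b) (hne : a ≠ b) :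
    ∃ k : G, a ≤ k • x ∧ b ≤ k • y := by
  rcases h.cases_tail with heq | ⟨c, hac, k, hc, hb⟩
  · exact absurd heq.symm hne
  · exact ⟨k, (genRel_le hac).trans (hc.le.trans inf_le_left), hb⟩

lemma smul_cancel {g : G} {a b : L} (h : g • a = g • b) : a = b := by
  have := congrArg (g⁻¹ • ·) h
  simpa using this

/-- `⌊x → y⌋` with the orbit of `(x, y)` removed: still a transfer system. -/
def genRemove [Finite G] {x y : L} (hxy : x < y) : TransferSystem G L where
  rel a b := genRel G x y a b ∧ ¬ ∃ g : G, g • x = a ∧ g • y = b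
  refl a := ⟨Relation.ReflTransGen.refl, by
    rintro ⟨g, h1, h2⟩
    exact hxy.ne (smul_cancel (h1.trans h2.symm))⟩
  trans {a b c} h1 h2 := by
    refine ⟨h1.1.trans h2.1, ?_⟩
    rintro ⟨g, rfl, rfl⟩
    by_cases hab : g • x = b
    · exact h2.2 ⟨g, hab, rfl⟩
    by_cases hbc : b = g • y
    · exact h1.2 ⟨g, rfl, hbc.symm⟩
    obtain ⟨k, hbk, _⟩ := genRel_last h2.1 hbc
    have hgk : g • x ≤ k • x := (genRel_le h1.1).trans hbk
    have hk : (k⁻¹ * g) • x ≤ x := by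
      have := smul_mono' k⁻¹ hgk
      simpa [mul_smul] using this
    have heq : k • x = g • x := by
      have h' := smul_le_rigid (k⁻¹ * g) x hk
      calc k • x = k • ((k⁻¹ * g) • x) := by rw [h']
        _ = g • x := by rw [← mul_smul, mul_inv_cancel_left]
    exact hab (le_antisymm (genRel_le h1.1) (hbk.trans heq.le))
  le_of_rel h := genRel_le h.1
  smul_rel g {a b} h := by
    refine ⟨(genTS (G := G) x y).smul_rel g h.1, ?_⟩
    rintro ⟨k, hk1, hk2⟩
    refine h.2 ⟨g⁻¹ * k, ?_, ?_⟩
    · rw [mul_smul, hk1, inv_smul_smul]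
    · rw [mul_smul, hk2, inv_smul_smul]
  restrict {a b a'} h hle := by
    refine ⟨(genTS (G := G) x y).restrict h.1 hle, ?_⟩
    rintro ⟨g, hg1, hg2⟩
    by_cases hab : a = b
    · subst hab
      refine hxy.ne (smul_cancel (g := g) ?_)
      rw [hg1, hg2, inf_eq_right.mpr hle]
    obtain ⟨k, hak, hbk⟩ := genRel_last h.1 hab
    have h1 : g • y ≤ k • y := by rw [hg2]; exact hle.trans hbk
    have hk : (k⁻¹ * g) • y ≤ y := by
      have := smul_mono' k⁻¹ h1
      simpa [mul_smul] using this
    have heq : k • y = g • y := by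
      have h' := smul_le_rigid (k⁻¹ * g) y hk
      calc k • y = k • ((k⁻¹ * g) • y) := by rw [h']
        _ = g • y := by rw [← mul_smul, mul_inv_cancel_left]
    have hba' : b = a' := le_antisymm (hbk.trans (heq.trans hg2).le) hle
    have haa' : a ≤ a' := hba' ▸ genRel_le h.1
    refine h.2 ⟨g, ?_, ?_⟩
    · rw [hg1, inf_eq_left.mpr haa']
    · rw [hg2, hba']

lemma genRemove_not_rel [Finite G] {x y : L} (hxy : x < y) :
    ¬ (genRemove (G := G) hxy).rel x y :=
  fun h => h.2 ⟨1, one_smul _ _, one_smul _ _⟩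

lemma le_genRemove [Finite G] {x y : L} (hxy : x < y) {A : TransferSystem G L}
    (hle : A ≤ gen (G := G) x y) (hA : ¬ A.rel x y) : A ≤ genRemove hxy := by
  intro a b h
  refine ⟨(gen_rel_iff hxy.le).1 (hle h), ?_⟩
  rintro ⟨g, rfl, rfl⟩
  refine hA ?_
  have := A.smul_rel g⁻¹ h
  simpa using this

/-- The trivial (discrete) transfer system. -/
def trivialTS : TransferSystem G L where
  rel a b := a = b
  refl _ := rfl
  trans h1 h2 := h1.trans h2
  le_of_rel h := h.le
  smul_rel g {x y} h := congrArg (g • ·) h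
  restrict {a b a'} h hle := by subst h; exact inf_eq_right.mpr hle

lemma supIrred_gen [Finite G] {x y : L} (hxy : x < y) :
    SupIrred (gen (G := G) x y) := by
  constructor
  · intro hmin
    have h1 : (trivialTS : TransferSystem G L) ≤ gen (G := G) x y :=
      fun a b h => h ▸ (gen (G := G) x y).refl a
    exact hxy.ne (hmin h1 (gen_rel_self hxy.le))
  · intro A B hAB
    by_contra hcon
    push_neg at hcon
    obtain ⟨hA, hB⟩ := hcon
    have hAle : A ≤ gen (G := G) x y := hAB ▸ le_sup_left
    have hBle : B ≤ gen (G := G) x y := hAB ▸ le_sup_right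
    have hA' : ¬ A.rel x y := fun h => hA (le_antisymm hAle ((gen_le_iff hxy.le).2 h))
    have hB' : ¬ B.rel x y := fun h => hB (le_antisymm hBle ((gen_le_iff hxy.le).2 h))
    have hsup : gen (G := G) x y ≤ genRemove hxy :=
      hAB ▸ sup_le (le_genRemove hxy hAle hA') (le_genRemove hxy hBle hB')
    exact genRemove_not_rel hxy (hsup (gen_rel_self hxy.le))

lemma supIrred_finsetSup {α β : Type*} [CompleteLattice β] [DecidableEq α]
    {s : Finset α} {f : α → β} {a : β}
    (h : SupIrred a) (heq : a = s.sup f) : ∃ i ∈ s, f i = a := by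
  induction s using Finset.induction_on with
  | empty =>
    simp only [Finset.sup_empty] at heq
    exact absurd (show IsMin a by rw [heq]; exact isMin_bot) h.1
  | insert _ _ hx ih =>
    rw [Finset.sup_insert] at heq
    rcases h.2 heq.symm with h1 | h1
    · exact ⟨_, Finset.mem_insert_self .., h1⟩
    · obtain ⟨i, hi, hfi⟩ := ih h1.symm
      exact ⟨i, Finset.mem_insert_of_mem hi, hfi⟩

lemma supIrred_exists [Finite L] {T : TransferSystem G L} (hT : SupIrred T) :
    ∃ x y : L, x < y ∧ T = gen (G := G) x y := by
  classical
  have : Fintype L := Fintype.ofFinite L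
  set s : Finset (L × L) :=
    Finset.univ.filter (fun p => T.rel p.1 p.2 ∧ p.1 ≠ p.2) with hs
  have hdecomp : T = s.sup (fun p => gen (G := G) p.1 p.2) := by
    apply le_antisymm
    · intro a b hab
      by_cases hne : a = b
      · subst hne; exact (s.sup (fun p => gen (G := G) p.1 p.2)).refl a
      · have hmem : (a, b) ∈ s := by simp [hs, hab, hne]
        have hles : gen (G := G) a b ≤ s.sup (fun p => gen (G := G) p.1 p.2) :=
          Finset.le_sup (f := fun p => gen (G := G) p.1 p.2) hmem
        exact hles (gen_rel_self (T.le_of_rel hab))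
    · refine Finset.sup_le fun p hp => ?_
      simp only [hs, Finset.mem_filter, Finset.mem_univ, true_and] at hp
      exact (gen_le_iff (T.le_of_rel hp.1)).2 hp.1
  obtain ⟨p, hp, hpT⟩ := supIrred_finsetSup hT hdecomp
  simp only [hs, Finset.mem_filter, Finset.mem_univ, true_and] at hp
  exact ⟨p.1, p.2, lt_of_le_of_ne (T.le_of_rel hp.1) hp.2, hpT.symm⟩

lemma gen_eq_iff [Finite G] {x y x' y' : L} (h1 : x < y) (h2 : x' < y') :
    gen (G := G) x y = gen (G := G) x' y' ↔ ∃ g : G, g • x = x' ∧ g • y = y' := by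
  constructor
  · intro h
    by_contra hcon
    push_neg at hcon
    have hrel : (gen (G := G) x y).rel x' y' := by rw [h]; exact gen_rel_self h2.le
    have hrem : (genRemove h1).rel x' y' :=
      ⟨(gen_rel_iff h1.le).1 hrel, by rintro ⟨g, hg1, hg2⟩; exact hcon g hg1 hg2⟩
    have hle : gen (G := G) x' y' ≤ genRemove h1 := (gen_le_iff h2.le).2 hrem
    rw [← h] at hle
    exact genRemove_not_rel h1 (hle (gen_rel_self h1.le))
  · rintro ⟨g, rfl, rfl⟩
    apply le_antisymm
    · refine (gen_le_iff h1.le).2 ?_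
      have := (gen (G := G) (g • x) (g • y)).smul_rel g⁻¹
        (gen_rel_self (smul_mono' g h1.le))
      simpa using this
    · exact (gen_le_iff (smul_mono' g h1.le)).2
        ((gen (G := G) x y).smul_rel g (gen_rel_self h1.le))

end Aux

end TransferSystem

/-- The join-irreducible elements of `Tr(L)` are exactly the `⌊x → y⌋`
with `x < y`; the assignment `(x, y) ↦ ⌊x → y⌋` induces a bijection from the `G`-orbits
of pairs `x < y` to the join-irreducibles; in particular the number of join-irreducibles
equals the number of `G`-orbits of such pairs. -/
theorem supIrred_characterization {G L : Type*} [Group G] [Finite G] [Lattice L] [Finite L]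
    [MulAction G L] [CovariantClass G L (· • ·) (· ≤ ·)] :
    ({T : TransferSystem G L | SupIrred T} =
        {T : TransferSystem G L | ∃ x y : L, x < y ∧ T = TransferSystem.gen x y}) ∧
    (∀ p q : {p : L × L // p.1 < p.2},
        TransferSystem.gen (G := G) p.1.1 p.1.2 = TransferSystem.gen (G := G) q.1.1 q.1.2 ↔
          ∃ g : G, g • p.1 = q.1) ∧
    Nat.card {T : TransferSystem G L // SupIrred T} =
      Nat.card (Quotient (pairOrbitSetoid G L)) := by
  classical
  have part2 : ∀ p q : {p : L × L // p.1 < p.2},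
      TransferSystem.gen (G := G) p.1.1 p.1.2 = TransferSystem.gen (G := G) q.1.1 q.1.2 ↔
        ∃ g : G, g • p.1 = q.1 := by
    intro p q
    rw [TransferSystem.gen_eq_iff p.2 q.2]
    constructor
    · rintro ⟨g, hg1, hg2⟩
      exact ⟨g, Prod.ext (by simpa using hg1) (by simpa using hg2)⟩
    · rintro ⟨g, hg⟩
      refine ⟨g, ?_, ?_⟩
      · simpa using congrArg Prod.fst hg
      · simpa using congrArg Prod.snd hg
  have part1 : {T : TransferSystem G L | SupIrred T} =
      {T : TransferSystem G L | ∃ x y : L, x < y ∧ T = TransferSystem.gen x y} := by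
    ext T
    constructor
    · intro hT
      exact TransferSystem.supIrred_exists hT
    · rintro ⟨x, y, hxy, rfl⟩
      exact TransferSystem.supIrred_gen hxy
  refine ⟨part1, part2, ?_⟩
  let f : Quotient (pairOrbitSetoid G L) → {T : TransferSystem G L // SupIrred T} :=
    Quotient.lift
      (fun p : {p : L × L // p.1 < p.2} =>
        (⟨TransferSystem.gen p.1.1 p.1.2, TransferSystem.supIrred_gen p.2⟩ :
          {T : TransferSystem G L // SupIrred T}))
      (fun p q hpq => Subtype.ext ((part2 p q).2 hpq))
  have hinj : Function.Injective f := by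
    intro q1 q2
    refine Quotient.inductionOn₂ q1 q2 (fun p q h => ?_)
    exact Quotient.sound ((part2 p q).1 (congrArg Subtype.val h))
  have hsurj : Function.Surjective f := by
    rintro ⟨T, hT⟩
    obtain ⟨x, y, hxy, rfl⟩ := TransferSystem.supIrred_exists (G := G) hT
    exact ⟨Quotient.mk _ ⟨(x, y), hxy⟩, Subtype.ext rfl⟩
  exact (Nat.card_congr (Equiv.ofBijective f ⟨hinj, hsurj⟩)).symm
end

section
/- Let L be a finite G-lattice. For every cotransfer system C on L, the set C^⊠ is a transfer system on L, and the map C ↦ C^⊠ is an order-reversing bijection from the lattice coTr(L) of cotransfer systems on L to the lattice Tr(L) of transfer systems on L (i.e., a poset isomorphism coTr(L) ≅ Tr(L)^op). -/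
/-- A cotransfer system on a `G`-lattice `L`: a partial order refining `≤`,
closed under the `G`-action and under corestriction. -/
structure CoTransferSystem (G L : Type*) [Group G] [Lattice L] [MulAction G L] : Type _ where
  rel : L → L → Prop
  refl : ∀ x, rel x x
  trans : ∀ {x y z}, rel x y → rel y z → rel x z
  le_of_rel : ∀ {x y}, rel x y → x ≤ y
  smul_rel : ∀ (g : G) {x y}, rel x y → rel (g • x) (g • y)
  corestrict : ∀ {x y y'}, rel x y → x ≤ y' → rel y' (y ⊔ y')

namespace CoTransferSystem

variable {G L : Type*} [Group G] [Lattice L] [MulAction G L]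
  [CovariantClass G L (· • ·) (· ≤ ·)]

theorem ext' {S T : CoTransferSystem G L} (h : S.rel = T.rel) : S = T := by
  cases S; cases T; simpa using h

/-- Cotransfer systems are ordered by refinement. -/
instance : PartialOrder (CoTransferSystem G L) where
  le S T := ∀ ⦃x y : L⦄, S.rel x y → T.rel x y
  le_refl S := fun _ _ h => h
  le_trans S T U h1 h2 := fun _ _ h => h2 (h1 h)
  le_antisymm S T h1 h2 :=
    ext' (by funext x y; exact propext ⟨fun h => h1 h, fun h => h2 h⟩)

/-- `⌈x → y⌉`, the smallest cotransfer system containing the pair `(x, y)`. -/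
def gen (x y : L) : CoTransferSystem G L where
  rel a b := a ≤ b ∧ ∀ C : CoTransferSystem G L, C.rel x y → C.rel a b
  refl a := ⟨le_refl a, fun C _ => C.refl a⟩
  trans h1 h2 := ⟨h1.1.trans h2.1, fun C hC => C.trans (h1.2 C hC) (h2.2 C hC)⟩
  le_of_rel h := h.1
  smul_rel g _ _ h :=
    ⟨TransferSystem.smul_mono' g h.1, fun C hC => C.smul_rel g (h.2 C hC)⟩
  corestrict h hle := ⟨le_sup_right, fun C hC => C.corestrict (h.2 C hC) hle⟩

end CoTransferSystem

/-- `C^⊠`: the pairs `(a, b)` with `a ≤ b` having the right lifting property with respect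
to every pair of `C`. -/
def rlpRel {G L : Type*} [Group G] [Lattice L] [MulAction G L]
    (C : CoTransferSystem G L) : L → L → Prop :=
  fun a b => a ≤ b ∧ ∀ ⦃x y : L⦄, C.rel x y → x ≤ a → y ≤ b → y ≤ a

section Aux

variable {G L : Type*} [Group G] [Lattice L] [MulAction G L]
  [CovariantClass G L (· • ·) (· ≤ ·)]

/-- `C^⊠` as a transfer system. -/
def rlpTS (C : CoTransferSystem G L) : TransferSystem G L where
  rel := rlpRel C
  refl a := ⟨le_rfl, fun _ _ _ _ hya => hya⟩
  trans {a b c} h1 h2 := by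
    refine ⟨h1.1.trans h2.1, fun x y hxy hxa hyc => ?_⟩
    exact h1.2 hxy hxa (h2.2 hxy (hxa.trans h1.1) hyc)
  le_of_rel h := h.1
  smul_rel g {a b} h := by
    refine ⟨TransferSystem.smul_mono' g h.1, fun x y hxy hxa hyb => ?_⟩
    have h1 : g⁻¹ • x ≤ a := by
      have := TransferSystem.smul_mono' (g⁻¹) hxa
      rwa [inv_smul_smul] at this
    have h2 : g⁻¹ • y ≤ b := by
      have := TransferSystem.smul_mono' (g⁻¹) hyb
      rwa [inv_smul_smul] at this
    have := h.2 (C.smul_rel g⁻¹ hxy) h1 h2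
    have := TransferSystem.smul_mono' g this
    rwa [smul_inv_smul] at this
  restrict {a b a'} h hle := by
    refine ⟨inf_le_right, fun x y hxy hx hy => ?_⟩
    exact le_inf (h.2 hxy (hx.trans inf_le_left) (hy.trans hle)) hy

/-- The left lifting property cotransfer system of a transfer system. -/
def llpCS (T : TransferSystem G L) : CoTransferSystem G L where
  rel x y := x ≤ y ∧ ∀ ⦃a b : L⦄, T.rel a b → x ≤ a → y ≤ b → y ≤ a
  refl x := ⟨le_rfl, fun _ _ _ hxa _ => hxa⟩
  trans {x y z} h1 h2 :=
    ⟨h1.1.trans h2.1, fun a b hab hxa hzb =>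
      h2.2 hab (h1.2 hab hxa ((h2.1).trans hzb)) hzb⟩
  le_of_rel h := h.1
  smul_rel g {x y} h := by
    refine ⟨TransferSystem.smul_mono' g h.1, fun a b hab hxa hyb => ?_⟩
    have h1 : x ≤ g⁻¹ • a := by
      have := TransferSystem.smul_mono' (g⁻¹) hxa
      rwa [inv_smul_smul] at this
    have h2 : y ≤ g⁻¹ • b := by
      have := TransferSystem.smul_mono' (g⁻¹) hyb
      rwa [inv_smul_smul] at this
    have := h.2 (T.smul_rel g⁻¹ hab) h1 h2
    have := TransferSystem.smul_mono' g this
    rwa [smul_inv_smul] at this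
  corestrict {x y y'} h hle := by
    refine ⟨le_sup_right, fun a b hab hy'a hb => ?_⟩
    exact sup_le (h.2 hab (hle.trans hy'a) (le_sup_left.trans hb)) hy'a

variable [Finite L]

/-- Hard direction 1: `rlp(llp T) ≤ T`. -/
theorem rlp_llp_le (T : TransferSystem G L) {a b : L}
    (h : rlpRel (llpCS T) a b) : T.rel a b := by
  obtain ⟨hab, hlift⟩ := h
  -- take z minimal in {w ∈ [a,b] : T.rel w b}
  set S : Set L := {w | a ≤ w ∧ w ≤ b ∧ T.rel w b} with hS
  have hne : S.Nonempty := ⟨b, hab, le_rfl, T.refl b⟩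
  obtain ⟨z, hzS, hzmin⟩ := Set.Finite.exists_minimalFor id S (Set.toFinite S) hne
  obtain ⟨haz, hzb, hzT⟩ := hzS
  -- (a, z) ∈ llp(T)
  have hllp : (llpCS T).rel a z := by
    refine ⟨haz, fun u v huv hau hzv => ?_⟩
    have h1 : T.rel (u ⊓ z) z := T.restrict huv hzv
    have h2 : T.rel (u ⊓ z) b := T.trans h1 hzT
    have hmem : u ⊓ z ∈ S := ⟨le_inf hau haz, inf_le_right.trans hzb, h2⟩
    have : id z = id (u ⊓ z) := le_antisymm (hzmin hmem inf_le_right) inf_le_right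
    simp only [id] at this
    calc z = u ⊓ z := this ▸ rfl
    _ ≤ u := inf_le_left
  have hza : z ≤ a := hlift hllp le_rfl hzb
  have : z = a := le_antisymm hza haz
  exact this ▸ hzT

/-- Hard direction 2: `llp(rlp C) ≤ C`. -/
theorem llp_rlp_le (C : CoTransferSystem G L) {a b : L}
    (h : (llpCS (rlpTS C)).rel a b) : C.rel a b := by
  obtain ⟨hab, hlift⟩ := h
  -- take z maximal in {w ∈ [a,b] : C.rel a w}
  set S : Set L := {w | a ≤ w ∧ w ≤ b ∧ C.rel a w} with hS
  have hne : S.Nonempty := ⟨a, le_rfl, hab, C.refl a⟩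
  obtain ⟨z, hzS, hzmax⟩ := Set.Finite.exists_maximalFor id S (Set.toFinite S) hne
  obtain ⟨haz, hzb, hzC⟩ := hzS
  -- (z, b) ∈ rlp(C)
  have hrlp : (rlpTS C).rel z b := by
    refine ⟨hzb, fun u v huv huz hvb => ?_⟩
    have h1 : C.rel z (v ⊔ z) := C.corestrict huv huz
    have h2 : C.rel a (v ⊔ z) := C.trans hzC h1
    have hmem : v ⊔ z ∈ S := ⟨haz.trans le_sup_right, sup_le hvb hzb, h2⟩
    have : id z = id (v ⊔ z) := le_antisymm le_sup_right (hzmax hmem le_sup_right)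
    simp only [id] at this
    calc v ≤ v ⊔ z := le_sup_left
    _ = z := this.symm
  have hbz : b ≤ z := hlift hrlp haz le_rfl
  have : z = b := le_antisymm hzb hbz
  exact this ▸ hzC

theorem rlp_llp_eq (T : TransferSystem G L) : rlpTS (llpCS T) = T := by
  apply TransferSystem.ext'
  funext a b
  refine propext ⟨fun h => rlp_llp_le T h, fun h => ⟨T.le_of_rel h, ?_⟩⟩
  exact fun x y hxy hxa hyb => hxy.2 h hxa hyb

theorem llp_rlp_eq (C : CoTransferSystem G L) : llpCS (rlpTS C) = C := by
  apply CoTransferSystem.ext'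
  funext a b
  refine propext ⟨fun h => llp_rlp_le C h, fun h => ⟨C.le_of_rel h, ?_⟩⟩
  exact fun x y hxy hax hby => hxy.2 h hax hby

end Aux

/-- For every cotransfer system `C` on `L`, `C^⊠` is a transfer system,
and `C ↦ C^⊠` is an order-reversing bijection `coTr(L) ≅ Tr(L)ᵒᵖ`. -/
theorem rlp_orderIso {G L : Type*} [Group G] [Finite G] [Lattice L] [Finite L]
    [MulAction G L] [CovariantClass G L (· • ·) (· ≤ ·)] :
    ∃ F : CoTransferSystem G L → TransferSystem G L,
      (∀ C : CoTransferSystem G L, (F C).rel = rlpRel C) ∧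
      Function.Bijective F ∧
      ∀ C D : CoTransferSystem G L, C ≤ D ↔ F D ≤ F C := by
  refine ⟨rlpTS, fun _ => rfl, ⟨?_, ?_⟩, ?_⟩
  · -- injective
    intro C D h
    have := congrArg llpCS h
    rwa [llp_rlp_eq, llp_rlp_eq] at this
  · -- surjective
    intro T
    exact ⟨llpCS T, rlp_llp_eq T⟩
  · -- order-reversing
    intro C D
    constructor
    · intro hCD x y h
      exact ⟨h.1, fun u v huv hux hvy => h.2 (hCD huv) hux hvy⟩
    · intro h x y hxy
      have h1 : (llpCS (rlpTS C)).rel x y := by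
        rw [llp_rlp_eq]
        exact hxy
      have h2 : (llpCS (rlpTS D)).rel x y :=
        ⟨h1.1, fun a b hab hxa hyb => h1.2 (h hab) hxa hyb⟩
      rw [llp_rlp_eq] at h2
      exact h2
end

section
/- Let L be a finite G-lattice and let x, y ∈ L with x ≤ y. Then the cotransfer system ⌈x → y⌉ equals the reflexive-transitive closure of the binary relation {(z, (g·y) ∨ z) : g ∈ G, z ∈ L, g·x ≤ z}. -/
section Aux

variable {G L : Type*} [Group G] [Lattice L] [MulAction G L]
  [CovariantClass G L (· • ·) (· ≤ ·)]

lemma smul_sup' (g : G) (a b : L) : g • (a ⊔ b) = g • a ⊔ g • b := by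
  refine le_antisymm ?_ (sup_le (TransferSystem.smul_mono' g le_sup_left)
    (TransferSystem.smul_mono' g le_sup_right))
  have h : a ⊔ b ≤ g⁻¹ • (g • a ⊔ g • b) := by
    refine sup_le ?_ ?_
    · have := TransferSystem.smul_mono' g⁻¹ (le_sup_left : g • a ≤ g • a ⊔ g • b)
      simpa [inv_smul_smul] using this
    · have := TransferSystem.smul_mono' g⁻¹ (le_sup_right : g • b ≤ g • a ⊔ g • b)
      simpa [inv_smul_smul] using this
  have := TransferSystem.smul_mono' g h
  simpa [smul_inv_smul] using this

/-- The reflexive-transitive closure of the generating relation is a cotransfer system. -/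
def rtcCTS (x y : L) : CoTransferSystem G L where
  rel := Relation.ReflTransGen (fun z w => ∃ g : G, g • x ≤ z ∧ w = (g • y) ⊔ z)
  refl _ := Relation.ReflTransGen.refl
  trans := Relation.ReflTransGen.trans
  le_of_rel h := by
    induction h with
    | refl => exact le_rfl
    | tail _ hbc ih => obtain ⟨g, hg, rfl⟩ := hbc; exact ih.trans le_sup_right
  smul_rel g {a b} h := by
    induction h with
    | refl => exact Relation.ReflTransGen.refl
    | tail _ hbc ih =>
      obtain ⟨k, hk, rfl⟩ := hbc
      refine ih.tail ⟨g * k, ?_, ?_⟩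
      · rw [mul_smul]; exact TransferSystem.smul_mono' g hk
      · rw [smul_sup', mul_smul]
  corestrict {a b y'} h hle := by
    induction h with
    | refl => simpa [sup_eq_right.mpr hle] using
        (Relation.ReflTransGen.refl :
          Relation.ReflTransGen (fun z w => ∃ g : G, g • x ≤ z ∧ w = (g • y) ⊔ z) y' y')
    | @tail b c _ hbc ih =>
      obtain ⟨g, hg, rfl⟩ := hbc
      refine ih.tail ⟨g, hg.trans le_sup_left, ?_⟩
      rw [sup_assoc]

end Aux

/-- For `x ≤ y`, the cotransfer system `⌈x → y⌉` is the
reflexive-transitive closure of `{(z, (g • y) ⊔ z) : g ∈ G, g • x ≤ z}`. -/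
theorem cotsGen_eq_reflTransGen {G L : Type*} [Group G] [Finite G] [Lattice L] [Finite L]
    [MulAction G L] [CovariantClass G L (· • ·) (· ≤ ·)]
    (x y : L) (hxy : x ≤ y) :
    (CoTransferSystem.gen (G := G) x y).rel =
      Relation.ReflTransGen (fun z w => ∃ g : G, g • x ≤ z ∧ w = (g • y) ⊔ z) := by
  funext a b
  refine propext ⟨fun h => ?_, fun h => ?_⟩
  · refine h.2 (rtcCTS x y) ?_
    exact Relation.ReflTransGen.single ⟨1, by simpa using le_rfl,
      by rw [one_smul, sup_eq_left.mpr hxy]⟩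
  · have hgen : (CoTransferSystem.gen (G := G) x y).rel x y := ⟨hxy, fun C hC => hC⟩
    induction h with
    | refl => exact (CoTransferSystem.gen (G := G) x y).refl a
    | @tail b c _ hbc ih =>
      obtain ⟨g, hg, rfl⟩ := hbc
      exact (CoTransferSystem.gen (G := G) x y).trans ih
        ((CoTransferSystem.gen (G := G) x y).corestrict
          ((CoTransferSystem.gen (G := G) x y).smul_rel g hgen) hg)
end

section
/- For every integer n ≥ 1, the maximum of (n − i)(n + 3i) over integers i with 0 ≤ i ≤ n − 1 equals ⌊4n²/3⌋. -/
/-- For every `n ≥ 1`, the maximum of `(n - i)(n + 3i)` over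
`0 ≤ i ≤ n - 1` equals `⌊4n²/3⌋`. -/
theorem max_eq_floor (n : ℕ) (hn : 1 ≤ n) :
    (Finset.range n).sup (fun i => (n - i) * (n + 3 * i)) = 4 * n ^ 2 / 3 := by
  apply le_antisymm
  · apply Finset.sup_le
    intro i hi
    rw [Finset.mem_range] at hi
    rw [Nat.le_div_iff_mul_le (by norm_num)]
    zify [hi.le]
    nlinarith [sq_nonneg ((n:ℤ) - 3*i)]
  · obtain ⟨k, hk⟩ : ∃ k, n = 3*k ∨ n = 3*k+1 ∨ n = 3*k+2 := ⟨n/3, by omega⟩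
    rcases hk with h | h | h <;> subst h
    · have hk1 : 1 ≤ k := by omega
      have hmem : k ∈ Finset.range (3*k) := Finset.mem_range.mpr (by omega)
      calc 4 * (3*k) ^ 2 / 3 = 12 * k^2 := by
            have : 4 * (3*k)^2 = 12 * k^2 * 3 := by ring
            rw [this, Nat.mul_div_cancel _ (by norm_num)]
        _ ≤ (3*k - k) * (3*k + 3*k) := by
            have h2 : 3*k - k = 2*k := by omega
            rw [h2]; nlinarith
        _ ≤ _ := Finset.le_sup (f := fun i => (3*k - i) * (3*k + 3 * i)) hmem
    · have hmem : k ∈ Finset.range (3*k+1) := Finset.mem_range.mpr (by omega)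
      calc 4 * (3*k+1) ^ 2 / 3 = 12 * k^2 + 8*k + 1 := by
            have : 4 * (3*k+1)^2 = (12 * k^2 + 8*k + 1) * 3 + 1 := by ring
            rw [this]; omega
        _ ≤ (3*k+1 - k) * (3*k+1 + 3*k) := by
            have h2 : 3*k+1 - k = 2*k+1 := by omega
            rw [h2]; nlinarith
        _ ≤ _ := Finset.le_sup (f := fun i => (3*k+1 - i) * (3*k+1 + 3 * i)) hmem
    · have hmem : k+1 ∈ Finset.range (3*k+2) := Finset.mem_range.mpr (by omega)
      calc 4 * (3*k+2) ^ 2 / 3 = 12 * k^2 + 16*k + 5 := by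
            have : 4 * (3*k+2)^2 = (12 * k^2 + 16*k + 5) * 3 + 1 := by ring
            rw [this]; omega
        _ ≤ (3*k+2 - (k+1)) * (3*k+2 + 3*(k+1)) := by
            have h2 : 3*k+2 - (k+1) = 2*k+1 := by omega
            rw [h2]; nlinarith
        _ ≤ _ := Finset.le_sup (f := fun i => (3*k+2 - i) * (3*k+2 + 3 * i)) hmem
end

section
/- Let L be a finite G-lattice with maximum element ⊤, and let x ∈ L. Then the set {y ∈ L : the pair (y, ⊤) belongs to ⌊x → ⊤⌋} equals the set {⋀_{g ∈ S} g·x : S ⊆ G}, where the meet over the empty subset S = ∅ is ⊤. -/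
section Aux

variable {G L : Type*} [Group G] [Lattice L] [MulAction G L]
  [CovariantClass G L (· • ·) (· ≤ ·)]

lemma my_smul_mono (g : G) {a b : L} (h : a ≤ b) : g • a ≤ g • b :=
  CovariantClass.elim g h

lemma my_smul_top [OrderTop L] (g : G) : g • (⊤ : L) = ⊤ := by
  refine le_antisymm le_top ?_
  calc (⊤ : L) = g • (g⁻¹ • ⊤) := (smul_inv_smul g ⊤).symm
    _ ≤ g • ⊤ := my_smul_mono g le_top

lemma my_smul_inf (g : G) (a b : L) : g • (a ⊓ b) = g • a ⊓ g • b := by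
  refine le_antisymm (le_inf (my_smul_mono g inf_le_left) (my_smul_mono g inf_le_right)) ?_
  calc g • a ⊓ g • b = g • (g⁻¹ • (g • a ⊓ g • b)) := (smul_inv_smul _ _).symm
    _ ≤ g • (a ⊓ b) := by
        refine my_smul_mono g (le_inf ?_ ?_)
        · calc g⁻¹ • (g • a ⊓ g • b) ≤ g⁻¹ • (g • a) := my_smul_mono _ inf_le_left
            _ = a := inv_smul_smul g a
        · calc g⁻¹ • (g • a ⊓ g • b) ≤ g⁻¹ • (g • b) := my_smul_mono _ inf_le_right
            _ = b := inv_smul_smul g b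

lemma my_smul_finset_inf [OrderTop L] [DecidableEq G] (g : G) (x : L) (S : Finset G) :
    g • S.inf (fun h => h • x) = (S.image (g * ·)).inf (fun h => h • x) := by
  induction S using Finset.induction_on with
  | empty => simpa using my_smul_top g
  | insert _ _ hmem ih =>
      rename_i a s
      rw [Finset.inf_insert, my_smul_inf, Finset.image_insert, Finset.inf_insert, ih,
        smul_smul]

/-- The explicit transfer system witnessing the generated one. -/
def witnessTS [OrderTop L] (x : L) : TransferSystem G L where
  rel a b := a ≤ b ∧ ∃ S : Finset G, a = b ⊓ S.inf (fun g => g • x)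
  refl a := ⟨le_rfl, ∅, by simp⟩
  trans := by
    rintro a b c ⟨hab, S₁, rfl⟩ ⟨hbc, S₂, rfl⟩
    classical
    refine ⟨hab.trans hbc, S₂ ∪ S₁, ?_⟩
    rw [Finset.inf_union, inf_assoc]
  le_of_rel h := h.1
  smul_rel := by
    rintro g a b ⟨hab, S, rfl⟩
    classical
    exact ⟨my_smul_mono g hab, S.image (g * ·), by
      rw [my_smul_inf, my_smul_finset_inf]⟩
  restrict := by
    rintro a b a' ⟨hab, S, rfl⟩ hle
    refine ⟨inf_le_right, S, ?_⟩
    rw [inf_comm b, inf_assoc, inf_comm _ a', inf_of_le_left hle, inf_comm]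

lemma witnessTS_rel_x_top [OrderTop L] (x : L) :
    (witnessTS (G := G) x).rel x ⊤ :=
  ⟨le_top, {1}, by simp⟩

end Aux

/-- In a finite `G`-lattice with maximum element `⊤`, the sources of the
arrows into `⊤` in `⌊x → ⊤⌋` are exactly the meets `⋀_{g ∈ S} g • x` over subsets `S ⊆ G`
(the empty meet being `⊤`). -/
theorem gen_top_sources {G L : Type*} [Group G] [Finite G] [Lattice L] [OrderTop L]
    [Finite L] [MulAction G L] [CovariantClass G L (· • ·) (· ≤ ·)] (x : L) :
    {y : L | (TransferSystem.gen (G := G) x ⊤).rel y ⊤} =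
      {y : L | ∃ S : Finset G, y = S.inf (fun g => g • x)} := by
  classical
  have hx : (TransferSystem.gen (G := G) x ⊤).rel x ⊤ :=
    (TransferSystem.sInf_rel _ x ⊤).2 ⟨le_top, fun T hT => hT⟩
  ext y
  simp only [Set.mem_setOf_eq]
  constructor
  · intro hy
    have hT : (witnessTS (G := G) x).rel y ⊤ :=
      hy.2 (witnessTS (G := G) x) (witnessTS_rel_x_top x)
    obtain ⟨-, S, hS⟩ := hT
    exact ⟨S, by simpa using hS⟩
  · rintro ⟨S, rfl⟩
    induction S using Finset.induction_on with
    | empty => simpa using (TransferSystem.gen (G := G) x ⊤).refl ⊤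
    | insert _ _ hmem ih =>
        rename_i g s
        rw [Finset.inf_insert]
        have h1 : (TransferSystem.gen (G := G) x ⊤).rel (g • x) ⊤ := by
          have := (TransferSystem.gen (G := G) x ⊤).smul_rel g hx
          rwa [my_smul_top g] at this
        have h2 := (TransferSystem.gen (G := G) x ⊤).restrict h1
          (le_top : s.inf (fun g => g • x) ≤ ⊤)
        exact (TransferSystem.gen (G := G) x ⊤).trans h2 ih
end
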